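/- Let n ∈ ℕ, n ≥ 1, and let X be a set with distinguished element z. Let M = ⊕_{x ∈ X∖{z}} ℤ[t]/(1+t+⋯+t^{n-1}), with basis images e_i (e_z = 0). Then F = M × X with (a,i)*(b,j) = ((1−t)·a + t·b + e_i − e_j, j) is a medial quandle satisfying the n-symmetric law x*(x*⋯*(x*y)) = y (n occurrences of x), and it is the free n-symmetric medial quandle on {(0,i) : i ∈ X}. -/

import Mathlib

open Polynomial

/-- The ring `ℤ[t]/(1 + t + ⋯ + t^{n-1})`. -/
abbrev symMQ.R (n : ℕ) : Type :=
  Polynomial ℤ ⧸ Ideal.span {∑ i ∈ Finset.range n, (X : Polynomial ℤ) ^ i}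

/-- The image `t` of the variable in `ℤ[t]/(1 + t + ⋯ + t^{n-1})`. -/
noncomputable def symMQ.t (n : ℕ) : symMQ.R n :=
  Ideal.Quotient.mk _ (X : Polynomial ℤ)

/-- The basis vectors `e_i` of `⊕_{x ∈ X∖{z}} ℤ[t]/(1+t+⋯+t^{n-1})`, with `e_z = 0`. -/
noncomputable def symMQ.e {X : Type*} [DecidableEq X] (n : ℕ) (z : X) (i : X) :
    {x : X // x ≠ z} →₀ symMQ.R n :=
  if h : i = z then 0 else Finsupp.single ⟨i, h⟩ 1

/-- The operation `(a,i) * (b,j) = ((1-t)·a + t·b + e_i - e_j, j)` on `M × X`, where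
`M = ⊕_{x ∈ X∖{z}} ℤ[t]/(1+t+⋯+t^{n-1})`. -/
noncomputable def symMQ.op {X : Type*} [DecidableEq X] (n : ℕ) (z : X)
    (p q : ({x : X // x ≠ z} →₀ symMQ.R n) × X) :
    ({x : X // x ≠ z} →₀ symMQ.R n) × X :=
  ((1 - symMQ.t n) • p.1 + symMQ.t n • q.1 + symMQ.e n z p.2 - symMQ.e n z q.2, q.2)

namespace symMQ

lemma geom_t (n : ℕ) : (∑ i ∈ Finset.range n, (t n) ^ i) = 0 := by
  have : (∑ i ∈ Finset.range n, (t n) ^ i) =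
      Ideal.Quotient.mk _ (∑ i ∈ Finset.range n, (X : Polynomial ℤ) ^ i) := by
    rw [map_sum]
    simp [t]
  rw [this, Ideal.Quotient.eq_zero_iff_mem]
  exact Ideal.subset_span rfl

lemma t_pow_n (n : ℕ) : (t n) ^ n = 1 := by
  have h := geom_t n
  have h2 := mul_geom_sum (t n) n
  rw [h, mul_zero] at h2
  linear_combination -h2

end symMQ

namespace symMQ

variable {X : Type*} [DecidableEq X] (n : ℕ) (z : X)

lemma op_idem (p) : op n z p p = p := by
  cases p with
  | mk a i =>
    unfold op
    refine Prod.ext ?_ rfl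
    show (1 - t n) • a + t n • a + e n z i - e n z i = a
    module

lemma op_ld (p q r) : op n z p (op n z q r) = op n z (op n z p q) (op n z p r) := by
  unfold op
  refine Prod.ext ?_ rfl
  show (1 - t n) • p.1 + t n • ((1 - t n) • q.1 + t n • r.1 + e n z q.2 - e n z r.2)
      + e n z p.2 - e n z r.2 = _
  show _ = (1 - t n) • ((1 - t n) • p.1 + t n • q.1 + e n z p.2 - e n z q.2)
      + t n • ((1 - t n) • p.1 + t n • r.1 + e n z p.2 - e n z r.2) + e n z q.2 - e n z r.2
  module

lemma op_med (p q u v) : op n z (op n z p q) (op n z u v) = op n z (op n z p u) (op n z q v) := by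
  unfold op
  refine Prod.ext ?_ rfl
  show (1 - t n) • ((1 - t n) • p.1 + t n • q.1 + e n z p.2 - e n z q.2)
      + t n • ((1 - t n) • u.1 + t n • v.1 + e n z u.2 - e n z v.2) + e n z q.2 - e n z v.2 = _
  show _ = (1 - t n) • ((1 - t n) • p.1 + t n • u.1 + e n z p.2 - e n z u.2)
      + t n • ((1 - t n) • q.1 + t n • v.1 + e n z q.2 - e n z v.2) + e n z u.2 - e n z v.2
  module

lemma op_iter (p q) (k : ℕ) : (fun r => op n z p r)^[k] q =
    ((1 - (t n)^k) • p.1 + (t n)^k • q.1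
      + (∑ m ∈ Finset.range k, (t n)^m) • (e n z p.2 - e n z q.2), q.2) := by
  induction k with
  | zero =>
    refine Prod.ext ?_ rfl
    show q.1 = (1 - (t n)^0) • p.1 + (t n)^0 • q.1 + (∑ m ∈ Finset.range 0, (t n)^m) • _
    simp only [pow_zero, Finset.range_zero, Finset.sum_empty]
    module
  | succ k ih =>
    rw [Function.iterate_succ_apply', ih]
    unfold op
    refine Prod.ext ?_ rfl
    show (1 - t n) • p.1 + t n • ((1 - (t n)^k) • p.1 + (t n)^k • q.1
        + (∑ m ∈ Finset.range k, (t n)^m) • (e n z p.2 - e n z q.2)) + e n z p.2 - e n z q.2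
      = (1 - (t n)^(k+1)) • p.1 + (t n)^(k+1) • q.1
        + (∑ m ∈ Finset.range (k+1), (t n)^m) • (e n z p.2 - e n z q.2)
    rw [geom_sum_succ, pow_succ]
    module

lemma op_nsym (hn : 1 ≤ n) (p q) : (fun r => op n z p r)^[n] q = q := by
  rw [op_iter, t_pow_n, geom_t]
  exact Prod.ext (by module) rfl

lemma op_div (hn : 1 ≤ n) (p q) : op n z p ((fun r => op n z p r)^[n-1] q) = q := by
  have h2 : (fun r => op n z p r)^[n-1+1] q = q := by
    rw [Nat.sub_add_cancel hn]; exact op_nsym n z hn p q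
  rw [Function.iterate_succ_apply'] at h2
  exact h2

lemma op_div' (hn : 1 ≤ n) (p u) : (fun r => op n z p r)^[n-1] (op n z p u) = u := by
  have h2 : (fun r => op n z p r)^[n-1+1] u = u := by
    rw [Nat.sub_add_cancel hn]; exact op_nsym n z hn p u
  rw [Function.iterate_succ_apply] at h2
  exact h2

end symMQ

namespace symMQ

variable {X : Type*} [DecidableEq X] (n : ℕ) (z : X)

lemma e_z : e n z z = 0 := by simp [e]

inductive Reach (n : ℕ) (z : X) : (({x : X // x ≠ z} →₀ R n) × X) → Prop
  | gen (i : X) : Reach n z (0, i)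
  | opc {p q} : Reach n z p → Reach n z q → Reach n z (op n z p q)

lemma reach_iter {p q} (hp : Reach n z p) (hq : Reach n z q) (k : ℕ) :
    Reach n z ((fun r => op n z p r)^[k] q) := by
  induction k with
  | zero => exact hq
  | succ k ih => rw [Function.iterate_succ_apply']; exact Reach.opc hp ih

lemma ht_aux (hn : 1 ≤ n) : t n * t n ^ (n-1) = 1 := by
  rw [← pow_succ', Nat.sub_add_cancel hn, t_pow_n]

lemma hs_aux (hn : 1 ≤ n) : t n * (∑ m ∈ Finset.range (n-1), t n ^ m) = -1 := by
  have h := geom_sum_succ (x := t n) (n := n - 1)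
  rw [Nat.sub_add_cancel hn, geom_t] at h
  linear_combination -h

lemma reach_formula (hn : 1 ≤ n) (c c' : {x : X // x ≠ z} →₀ R n) (j j' : X) (q) :
    op n z (c, j) ((fun r => op n z (c', j') r)^[n-1] q)
      = (q.1 + (1 - t n) • (c - c') + e n z j - e n z j', q.2) := by
  rw [op_iter]
  unfold op
  refine Prod.ext ?_ rfl
  dsimp only
  have ht := ht_aux n hn
  have hs := hs_aux n hn
  match_scalars <;>
  first
    | ring1
    | linear_combination ht
    | linear_combination -ht
    | linear_combination hs
    | linear_combination -hs
    | linear_combination 2*hs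
    | linear_combination -2*hs
    | linear_combination ht + hs
    | linear_combination ht - hs
    | linear_combination -ht + hs
    | linear_combination -ht - hs

end symMQ

namespace symMQ

variable {X : Type*} [DecidableEq X] (n : ℕ) (z : X)

lemma reach_t_formula (hn : 1 ≤ n) (m : {x : X // x ≠ z} →₀ R n) (q) :
    op n z ((0 : {x : X // x ≠ z} →₀ R n), z)
      ((((fun r => op n z ((0 : {x : X // x ≠ z} →₀ R n), z) r)^[n-1] q).1 + m), q.2)
      = (q.1 + t n • m, q.2) := by
  rw [op_iter]
  unfold op
  refine Prod.ext ?_ rfl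
  dsimp only
  rw [e_z]
  have ht := ht_aux n hn
  have hs := hs_aux n hn
  match_scalars <;>
  first
    | ring1
    | linear_combination ht
    | linear_combination -ht
    | linear_combination hs
    | linear_combination -hs

noncomputable def TT (hn : 1 ≤ n) : AddSubgroup ({x : X // x ≠ z} →₀ R n) where
  carrier := {m | ∀ q, Reach n z q → Reach n z (q.1 + m, q.2) ∧ Reach n z (q.1 - m, q.2)}
  zero_mem' := by
    intro q hq
    constructor <;> simpa using hq
  add_mem' := by
    intro m1 m2 h1 h2 q hq
    constructor
    · have r1 := (h1 q hq).1
      have r2 := (h2 _ r1).1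
      rw [← add_assoc] at *
      exact r2
    · have r1 := (h1 q hq).2
      have r2 := (h2 _ r1).2
      rw [sub_sub] at *
      exact r2
  neg_mem' := by
    intro m h q hq
    obtain ⟨h1, h2⟩ := h q hq
    constructor
    · rw [← sub_eq_add_neg]; exact h2
    · rw [sub_neg_eq_add]; exact h1

lemma TT_t (hn : 1 ≤ n) {m} (hm : m ∈ TT n z hn) : t n • m ∈ TT n z hn := by
  intro q hq
  have hq' := reach_iter n z (Reach.gen z) hq (n-1)
  have h2 : ((fun r => op n z ((0 : {x : X // x ≠ z} →₀ R n), z) r)^[n-1] q).2 = q.2 := by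
    rw [op_iter]
  constructor
  · have r1 := (hm _ hq').1
    rw [h2] at r1
    have r2 := Reach.opc (Reach.gen z) r1
    rwa [reach_t_formula n z hn m q] at r2
  · have r1 := (hm _ hq').2
    rw [h2, sub_eq_add_neg] at r1
    have r2 := Reach.opc (Reach.gen z) r1
    rw [reach_t_formula n z hn (-m) q] at r2
    have e3 : (q.1 + t n • -m, q.2) = (q.1 - t n • m, q.2) := by
      refine Prod.ext ?_ rfl; module
    rwa [e3] at r2

lemma TT_e (hn : 1 ≤ n) (j j' : X) : (e n z j - e n z j') ∈ TT n z hn := by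
  have key : ∀ (j j' : X) q, Reach n z q → Reach n z (q.1 + (e n z j - e n z j'), q.2) := by
    intro j j' q hq
    have r2 := Reach.opc (Reach.gen (n := n) (z := z) j) (reach_iter n z (Reach.gen j') hq (n-1))
    rw [reach_formula n z hn 0 0 j j' q] at r2
    have : (q.1 + (1 - t n) • ((0 : {x : X // x ≠ z} →₀ R n) - 0) + e n z j - e n z j', q.2)
        = (q.1 + (e n z j - e n z j'), q.2) := by
      refine Prod.ext ?_ rfl
      module
    rwa [this] at r2
  intro q hq
  refine ⟨key j j' q hq, ?_⟩
  have := key j' j q hq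
  rwa [show q.1 + (e n z j' - e n z j) = q.1 - (e n z j - e n z j') by module] at this

end symMQ

namespace symMQ

variable {X : Type*} [DecidableEq X] (n : ℕ) (z : X)

lemma e_mem_TT (hn : 1 ≤ n) (j : X) : e n z j ∈ TT n z hn := by
  have := TT_e n z hn j z
  rwa [e_z, sub_zero] at this

lemma single_mem_TT (hn : 1 ≤ n) (j : {x : X // x ≠ z}) (r : R n) :
    Finsupp.single j r ∈ TT n z hn := by
  obtain ⟨p, rfl⟩ := Ideal.Quotient.mk_surjective r
  induction p using Polynomial.induction_on with
  | C k =>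
    have he : e n z j.1 = Finsupp.single j 1 := by
      simp [e, j.2]
    have hval : Finsupp.single j ((Ideal.Quotient.mk _ (C k)) : R n) = k • e n z j.1 := by
      rw [he, Finsupp.smul_single]
      congr 1
      rw [zsmul_eq_mul, mul_one, show ((C k : Polynomial ℤ)) = ((k : ℤ[X])) from Polynomial.C_eq_intCast k,
        map_intCast]
    rw [hval]
    exact zsmul_mem (e_mem_TT n z hn j.1) k
  | add p q ihp ihq =>
    rw [map_add, Finsupp.single_add]
    exact add_mem ihp ihq
  | monomial k a ih =>
    have hval : ((Ideal.Quotient.mk _ (C a * (Polynomial.X : Polynomial ℤ) ^ (k+1))) : R n)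
        = t n * Ideal.Quotient.mk _ (C a * (Polynomial.X : Polynomial ℤ) ^ k) := by
      show _ = Ideal.Quotient.mk _ (Polynomial.X : Polynomial ℤ) * _
      rw [← map_mul]
      congr 1
      ring
    rw [hval, ← Finsupp.smul_single']
    exact TT_t n z hn ih

lemma mem_TT (hn : 1 ≤ n) (a : {x : X // x ≠ z} →₀ R n) : a ∈ TT n z hn := by
  induction a using Finsupp.induction with
  | zero => exact zero_mem _
  | single_add j r f hjf hr ih =>
    exact add_mem (single_mem_TT n z hn j r) ih

lemma reach_all (hn : 1 ≤ n) (p : ({x : X // x ≠ z} →₀ R n) × X) : Reach n z p := by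
  have h := (mem_TT n z hn p.1 (0, p.2) (Reach.gen p.2)).1
  simpa using h

end symMQ

namespace symMQ

variable {Q : Type}

structure Good (op : Q → Q → Q) (n : ℕ) : Prop where
  hn : 1 ≤ n
  idem : ∀ x, op x x = x
  ld : ∀ x y w, op x (op y w) = op (op x y) (op x w)
  med : ∀ x y u v, op (op x y) (op u v) = op (op x u) (op y v)
  nsym : ∀ x y, (fun r => op x r)^[n] y = y

variable {op : Q → Q → Q} {n : ℕ}

def EQ (h : Good op n) (x : Q) : Equiv.Perm Q where
  toFun := op x
  invFun := (fun r => op x r)^[n-1]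
  left_inv := fun y => by
    have h2 : (fun r => op x r)^[n-1+1] y = y := by
      rw [Nat.sub_add_cancel h.hn]; exact h.nsym x y
    rw [Function.iterate_succ_apply] at h2; exact h2
  right_inv := fun y => by
    have h2 : (fun r => op x r)^[n-1+1] y = y := by
      rw [Nat.sub_add_cancel h.hn]; exact h.nsym x y
    rw [Function.iterate_succ_apply'] at h2; exact h2

lemma EQ_apply (h : Good op n) (x y : Q) : EQ h x y = op x y := rfl

lemma EQ_pow_n (h : Good op n) (x : Q) : (EQ h x)^n = 1 := by
  ext y
  have h1 : (EQ h x ^ n) y = (⇑(EQ h x))^[n] y := by rw [Equiv.Perm.iterate_eq_pow]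
  rw [h1]
  exact h.nsym x y

lemma EQ_mul (h : Good op n) (x y : Q) : EQ h (op x y) * EQ h x = EQ h x * EQ h y :=
  Equiv.ext fun r => (h.ld x y r).symm

lemma EQ_med (h : Good op n) (x a b : Q) : EQ h (op x a) * EQ h b = EQ h (op x b) * EQ h a :=
  Equiv.ext fun r => h.med x a b r

lemma EQ_op_inv (h : Good op n) (b c : Q) : op b ((EQ h b)⁻¹ c) = c :=
  (EQ h b).apply_symm_apply c

lemma EQ_conj_inv (h : Good op n) (b c : Q) :
    (EQ h b)⁻¹ * EQ h c = EQ h ((EQ h b)⁻¹ c) * (EQ h b)⁻¹ := by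
  have e1 : EQ h (op b ((EQ h b)⁻¹ c)) * EQ h b = EQ h b * EQ h ((EQ h b)⁻¹ c) := EQ_mul h b _
  rw [EQ_op_inv h b c] at e1
  calc (EQ h b)⁻¹ * EQ h c
      = (EQ h b)⁻¹ * (EQ h c * EQ h b) * (EQ h b)⁻¹ := by group
    _ = (EQ h b)⁻¹ * (EQ h b * EQ h ((EQ h b)⁻¹ c)) * (EQ h b)⁻¹ := by rw [e1]
    _ = EQ h ((EQ h b)⁻¹ c) * (EQ h b)⁻¹ := by group

lemma EQ_swap_pos (h : Good op n) (a b c : Q) :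
    EQ h a * (EQ h b)⁻¹ * EQ h c = EQ h c * (EQ h b)⁻¹ * EQ h a := by
  have key : EQ h a * EQ h ((EQ h b)⁻¹ c) = EQ h c * EQ h ((EQ h b)⁻¹ a) := by
    have e2 := EQ_med h b ((EQ h b)⁻¹ a) ((EQ h b)⁻¹ c)
    rw [EQ_op_inv h b a, EQ_op_inv h b c] at e2
    exact e2
  calc EQ h a * (EQ h b)⁻¹ * EQ h c
      = EQ h a * ((EQ h b)⁻¹ * EQ h c) := by group
    _ = EQ h a * (EQ h ((EQ h b)⁻¹ c) * (EQ h b)⁻¹) := by rw [EQ_conj_inv]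
    _ = (EQ h a * EQ h ((EQ h b)⁻¹ c)) * (EQ h b)⁻¹ := by group
    _ = (EQ h c * EQ h ((EQ h b)⁻¹ a)) * (EQ h b)⁻¹ := by rw [key]
    _ = EQ h c * (EQ h ((EQ h b)⁻¹ a) * (EQ h b)⁻¹) := by group
    _ = EQ h c * ((EQ h b)⁻¹ * EQ h a) := by rw [← EQ_conj_inv]
    _ = EQ h c * (EQ h b)⁻¹ * EQ h a := by group

lemma EQ_swap_neg (h : Good op n) (a b c : Q) :
    (EQ h a)⁻¹ * EQ h b * (EQ h c)⁻¹ = (EQ h c)⁻¹ * EQ h b * (EQ h a)⁻¹ := by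
  calc (EQ h a)⁻¹ * EQ h b * (EQ h c)⁻¹
      = (EQ h c * (EQ h b)⁻¹ * EQ h a)⁻¹ := by group
    _ = (EQ h a * (EQ h b)⁻¹ * EQ h c)⁻¹ := by rw [← EQ_swap_pos h a b c]
    _ = (EQ h c)⁻¹ * EQ h b * (EQ h a)⁻¹ := by group

lemma EQ_comm (h : Good op n) (a b c d : Q) :
    Commute (EQ h a * (EQ h b)⁻¹) (EQ h c * (EQ h d)⁻¹) := by
  show _ = _
  calc (EQ h a * (EQ h b)⁻¹) * (EQ h c * (EQ h d)⁻¹)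
      = (EQ h a * (EQ h b)⁻¹ * EQ h c) * (EQ h d)⁻¹ := by group
    _ = (EQ h c * (EQ h b)⁻¹ * EQ h a) * (EQ h d)⁻¹ := by rw [EQ_swap_pos]
    _ = EQ h c * ((EQ h b)⁻¹ * EQ h a * (EQ h d)⁻¹) := by group
    _ = EQ h c * ((EQ h d)⁻¹ * EQ h a * (EQ h b)⁻¹) := by rw [EQ_swap_neg]
    _ = (EQ h c * (EQ h d)⁻¹) * (EQ h a * (EQ h b)⁻¹) := by group

def TQ (h : Good op n) (q₀ q : Q) : Equiv.Perm Q := EQ h q * (EQ h q₀)⁻¹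

abbrev HQ (h : Good op n) (q₀ : Q) : Subgroup (Equiv.Perm Q) :=
  Subgroup.closure (Set.range (TQ h q₀))

lemma TQ_mem (h : Good op n) (q₀ q : Q) : TQ h q₀ q ∈ HQ h q₀ :=
  Subgroup.subset_closure ⟨q, rfl⟩

lemma HQ_comm (h : Good op n) (q₀ : Q) :
    ∀ g ∈ HQ h q₀, ∀ g' ∈ HQ h q₀, Commute g g' := by
  intro g hg g' hg'
  refine Subgroup.closure_induction₂ ?_ ?_ ?_ ?_ ?_ ?_ ?_ hg hg'
  · rintro _ _ ⟨q1, rfl⟩ ⟨q2, rfl⟩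
    exact EQ_comm h q1 q₀ q2 q₀
  · intro x _; exact Commute.one_left x
  · intro x _; exact Commute.one_right x
  · intro x y zz _ _ _ hx hy; exact hx.mul_left hy
  · intro y zz x _ _ _ hy hz; exact hy.mul_right hz
  · intro x y _ _ hxy; exact hxy.inv_left
  · intro x y _ _ hxy; exact hxy.inv_right

abbrev HQcg (h : Good op n) (q₀ : Q) : CommGroup ↥(HQ h q₀) :=
  Subgroup.closureCommGroupOfComm (fun x hx y hy =>
    (HQ_comm h q₀ x (Subgroup.subset_closure hx) y (Subgroup.subset_closure hy)).eq)

lemma theta_conj (h : Good op n) (q₀ q : Q) :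
    EQ h q₀ * TQ h q₀ q * (EQ h q₀)⁻¹ = TQ h q₀ (op q₀ q) := by
  have e1 := EQ_mul h q₀ q
  unfold TQ
  calc EQ h q₀ * (EQ h q * (EQ h q₀)⁻¹) * (EQ h q₀)⁻¹
      = (EQ h q₀ * EQ h q) * (EQ h q₀)⁻¹ * (EQ h q₀)⁻¹ := by group
    _ = (EQ h (op q₀ q) * EQ h q₀) * (EQ h q₀)⁻¹ * (EQ h q₀)⁻¹ := by rw [← e1]
    _ = EQ h (op q₀ q) * (EQ h q₀)⁻¹ := by group

lemma HQ_theta_conj_mem (h : Good op n) (q₀ : Q) {g} (hg : g ∈ HQ h q₀) :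
    EQ h q₀ * g * (EQ h q₀)⁻¹ ∈ HQ h q₀ := by
  induction hg using Subgroup.closure_induction with
  | mem x hx =>
    obtain ⟨q, rfl⟩ := hx
    rw [theta_conj]
    exact TQ_mem h q₀ _
  | one => simpa using one_mem _
  | mul x y _ _ ihx ihy =>
    have e : EQ h q₀ * (x*y) * (EQ h q₀)⁻¹
        = (EQ h q₀ * x * (EQ h q₀)⁻¹) * (EQ h q₀ * y * (EQ h q₀)⁻¹) := by group
    rw [e]; exact mul_mem ihx ihy
  | inv x _ ihx =>
    have e : EQ h q₀ * x⁻¹ * (EQ h q₀)⁻¹ = (EQ h q₀ * x * (EQ h q₀)⁻¹)⁻¹ := by group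
    rw [e]; exact inv_mem ihx

end symMQ

namespace symMQ

variable {Q : Type} {op : Q → Q → Q} {n : ℕ}

def tau (h : Good op n) (q₀ q : Q) : Additive ↥(HQ h q₀) :=
  Additive.ofMul (⟨TQ h q₀ q, TQ_mem h q₀ q⟩ : ↥(HQ h q₀))

def sigma0 (h : Good op n) (q₀ : Q) :
    Additive ↥(HQ h q₀) →+ Additive ↥(HQ h q₀) :=
  AddMonoidHom.mk'
    (fun a => Additive.ofMul
      (⟨EQ h q₀ * ((Additive.toMul a : ↥(HQ h q₀)) : Equiv.Perm Q) * (EQ h q₀)⁻¹,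
        HQ_theta_conj_mem h q₀ (Additive.toMul a).2⟩ : ↥(HQ h q₀)))
    (fun a b => by
      apply Additive.toMul.injective
      apply Subtype.ext
      show EQ h q₀ * ((Additive.toMul (a + b) : ↥(HQ h q₀)) : Equiv.Perm Q) * (EQ h q₀)⁻¹
          = (EQ h q₀ * ((Additive.toMul a : ↥(HQ h q₀)) : Equiv.Perm Q) * (EQ h q₀)⁻¹)
            * (EQ h q₀ * ((Additive.toMul b : ↥(HQ h q₀)) : Equiv.Perm Q) * (EQ h q₀)⁻¹)
      simp only [toMul_add, MulMemClass.coe_mul]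
      group)

lemma vl_sigma0 (h : Good op n) (q₀ : Q) (a : Additive ↥(HQ h q₀)) :
    ((Additive.toMul (sigma0 h q₀ a) : ↥(HQ h q₀)) : Equiv.Perm Q)
      = EQ h q₀ * ((Additive.toMul a : ↥(HQ h q₀)) : Equiv.Perm Q) * (EQ h q₀)⁻¹ := rfl

end symMQ

namespace symMQ

variable {Q : Type} {op : Q → Q → Q} {n : ℕ}

noncomputable instance instHQcg {h : Good op n} {q₀ : Q} : CommGroup ↥(HQ h q₀) := HQcg h q₀

noncomputable def pact (h : Good op n) (q₀ : Q) :
    Polynomial ℤ →+* AddMonoid.End (Additive ↥(HQ h q₀)) :=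
  Polynomial.eval₂RingHom' (Int.castRingHom _) (sigma0 h q₀)
    (fun k => Int.cast_commute k _)

lemma pact_X (h : Good op n) (q₀ : Q) : pact h q₀ Polynomial.X = sigma0 h q₀ := by
  show Polynomial.eval₂ _ _ _ = _
  exact Polynomial.eval₂_X _ _

lemma vl_pactXpow (h : Good op n) (q₀ : Q) (m : ℕ) (a : Additive ↥(HQ h q₀)) :
    ((Additive.toMul (pact h q₀ (Polynomial.X ^ m) a) : ↥(HQ h q₀)) : Equiv.Perm Q)
      = (EQ h q₀)^m * ((Additive.toMul a : ↥(HQ h q₀)) : Equiv.Perm Q) * ((EQ h q₀)^m)⁻¹ := by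
  induction m generalizing a with
  | zero =>
    rw [pow_zero, map_one]
    show ((Additive.toMul a : ↥(HQ h q₀)) : Equiv.Perm Q) = _
    rw [pow_zero]
    group
  | succ m ih =>
    rw [pow_succ, map_mul]
    show ((Additive.toMul (pact h q₀ (Polynomial.X ^ m) (pact h q₀ Polynomial.X a)) :
        ↥(HQ h q₀)) : Equiv.Perm Q) = _
    rw [ih, pact_X]
    erw [vl_sigma0]
    rw [pow_succ]
    group

lemma vl_geom (h : Good op n) (q₀ q : Q) (m : ℕ) :
    ((Additive.toMul (pact h q₀ (∑ i ∈ Finset.range m, Polynomial.X ^ i) (tau h q₀ q)) :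
        ↥(HQ h q₀)) : Equiv.Perm Q)
      = (EQ h q)^m * ((EQ h q₀)^m)⁻¹ := by
  induction m with
  | zero =>
    rw [Finset.range_zero, Finset.sum_empty, map_zero]
    show ((1 : ↥(HQ h q₀)) : Equiv.Perm Q) = _
    rw [pow_zero, pow_zero]
    simp
  | succ m ih =>
    rw [Finset.sum_range_succ, map_add]
    show ((Additive.toMul (pact h q₀ (∑ i ∈ Finset.range m, Polynomial.X ^ i) (tau h q₀ q)
        + pact h q₀ (Polynomial.X ^ m) (tau h q₀ q)) : ↥(HQ h q₀)) : Equiv.Perm Q) = _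
    rw [toMul_add, MulMemClass.coe_mul, ih, vl_pactXpow]
    show _ * ((EQ h q₀)^m * (TQ h q₀ q : Equiv.Perm Q) * ((EQ h q₀)^m)⁻¹) = _
    unfold TQ
    rw [pow_succ, pow_succ]
    group

lemma pact_P (h : Good op n) (q₀ q : Q) :
    pact h q₀ (∑ i ∈ Finset.range n, Polynomial.X ^ i) (tau h q₀ q) = 0 := by
  apply Additive.toMul.injective
  apply Subtype.ext
  show ((Additive.toMul (pact h q₀ (∑ i ∈ Finset.range n, Polynomial.X ^ i) (tau h q₀ q)) :
      ↥(HQ h q₀)) : Equiv.Perm Q) = ((Additive.toMul (0 : Additive ↥(HQ h q₀)) : ↥(HQ h q₀)) : Equiv.Perm Q)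
  rw [vl_geom, EQ_pow_n h q, EQ_pow_n h q₀]
  simp

noncomputable instance instModZX {h : Good op n} {q₀ : Q} :
    Module (Polynomial ℤ) (Additive ↥(HQ h q₀)) := Module.compHom _ (pact h q₀)

noncomputable def phi (h : Good op n) (q₀ g : Q) :
    R n →ₗ[Polynomial ℤ] Additive ↥(HQ h q₀) :=
  Submodule.liftQ _ (LinearMap.toSpanSingleton (Polynomial ℤ) _ (tau h q₀ g))
    (by
      rw [Ideal.span_le, Set.singleton_subset_iff, SetLike.mem_coe, LinearMap.mem_ker,
        LinearMap.toSpanSingleton_apply]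
      show pact h q₀ (∑ i ∈ Finset.range n, Polynomial.X ^ i) (tau h q₀ g) = 0
      exact pact_P h q₀ g)

lemma phi_mk (h : Good op n) (q₀ g : Q) (p : Polynomial ℤ) :
    phi h q₀ g (Ideal.Quotient.mk _ p) = pact h q₀ p (tau h q₀ g) := by
  exact Submodule.liftQ_apply _ _ p

end symMQ

namespace symMQ

variable {Q : Type} {op : Q → Q → Q} {n : ℕ} {ι : Type*}

noncomputable def actA (h : Good op n) (q₀ : Q) (gen : ι → Q) :
    (ι →₀ R n) →+ Additive ↥(HQ h q₀) :=
  Finsupp.liftAddHom (fun j => (phi h q₀ (gen j)).toAddMonoidHom)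

noncomputable def uu (h : Good op n) (q₀ : Q) (gen : ι → Q) (a : ι →₀ R n) : Equiv.Perm Q :=
  ((Additive.toMul (actA h q₀ gen a) : ↥(HQ h q₀)) : Equiv.Perm Q)

lemma uu_mem (h : Good op n) (q₀ : Q) (gen : ι → Q) (a : ι →₀ R n) :
    uu h q₀ gen a ∈ HQ h q₀ := (Additive.toMul (actA h q₀ gen a)).2

lemma uu_zero (h : Good op n) (q₀ : Q) (gen : ι → Q) : uu h q₀ gen 0 = 1 := by
  unfold uu
  rw [map_zero]
  rfl

lemma uu_add (h : Good op n) (q₀ : Q) (gen : ι → Q) (a b : ι →₀ R n) :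
    uu h q₀ gen (a + b) = uu h q₀ gen a * uu h q₀ gen b := by
  unfold uu
  rw [map_add, toMul_add, MulMemClass.coe_mul]

lemma uu_neg (h : Good op n) (q₀ : Q) (gen : ι → Q) (a : ι →₀ R n) :
    uu h q₀ gen (-a) = (uu h q₀ gen a)⁻¹ := by
  have e1 := uu_add h q₀ gen a (-a)
  rw [add_neg_cancel, uu_zero] at e1
  exact (inv_eq_of_mul_eq_one_right e1.symm).symm

lemma uu_single_one (h : Good op n) (q₀ : Q) (gen : ι → Q) (j : ι) :
    uu h q₀ gen (Finsupp.single j 1) = TQ h q₀ (gen j) := by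
  unfold uu actA
  rw [Finsupp.liftAddHom_apply_single]
  show ((Additive.toMul (phi h q₀ (gen j) (1 : R n)) : ↥(HQ h q₀)) : Equiv.Perm Q) = _
  have e1 : (1 : R n) = Ideal.Quotient.mk _ (1 : Polynomial ℤ) := by rw [map_one]
  rw [e1, phi_mk, map_one]
  rfl

set_option synthInstance.maxHeartbeats 1000000 in
lemma actA_tsmul (h : Good op n) (q₀ : Q) (gen : ι → Q) (a : ι →₀ R n) :
    actA h q₀ gen (t n • a) = sigma0 h q₀ (actA h q₀ gen a) := by
  induction a using Finsupp.induction with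
  | zero => rw [smul_zero, map_zero, map_zero]
  | single_add j r f hjf hr ih =>
    rw [smul_add, map_add, map_add, map_add, ih]
    congr 1
    rw [Finsupp.smul_single']
    unfold actA
    rw [Finsupp.liftAddHom_apply_single, Finsupp.liftAddHom_apply_single]
    obtain ⟨p, rfl⟩ := Ideal.Quotient.mk_surjective r
    have e1 : t n * Ideal.Quotient.mk _ p = Ideal.Quotient.mk _ (Polynomial.X * p) := by
      rw [map_mul]; rfl
    show phi h q₀ (gen j) (t n * Ideal.Quotient.mk _ p) = _
    rw [e1]
    show phi h q₀ (gen j) _ = sigma0 h q₀ (phi h q₀ (gen j) (Ideal.Quotient.mk _ p))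
    rw [phi_mk, phi_mk, map_mul]
    show (pact h q₀ Polynomial.X) ((pact h q₀ p) (tau h q₀ (gen j))) = _
    rw [pact_X]
    rfl

set_option synthInstance.maxHeartbeats 1000000 in
lemma uu_tsmul (h : Good op n) (q₀ : Q) (gen : ι → Q) (a : ι →₀ R n) :
    uu h q₀ gen (t n • a) = EQ h q₀ * uu h q₀ gen a * (EQ h q₀)⁻¹ := by
  unfold uu
  rw [actA_tsmul]
  exact vl_sigma0 h q₀ _

end symMQ

namespace symMQ

variable {Q : Type} {op : Q → Q → Q} {n : ℕ}

lemma EQ_trans (h : Good op n) (q₀ : Q) {g : Equiv.Perm Q} (hg : g ∈ HQ h q₀) :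
    ∀ x : Q, EQ h (g x) = g * (EQ h q₀ * g⁻¹ * (EQ h q₀)⁻¹) * EQ h x := by
  induction hg using Subgroup.closure_induction with
  | mem g0 hg0 =>
    obtain ⟨q, rfl⟩ := hg0
    intro x
    set y := (EQ h q₀)⁻¹ x with hy
    have hx : x = op q₀ y := by
      rw [hy]
      exact ((EQ h q₀).apply_symm_apply x).symm
    have e0 : TQ h q₀ q x = op q (y) := by
      show (EQ h q * (EQ h q₀)⁻¹) x = _
      rw [Equiv.Perm.mul_apply]
      rfl
    have eLD : ∀ u v : Q, EQ h (op u v) = EQ h u * EQ h v * (EQ h u)⁻¹ := by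
      intro u v
      have e := EQ_mul h u v
      rw [← e]
      group
    rw [e0, eLD q y, hx, eLD q₀ y]
    unfold TQ
    have swap := EQ_swap_pos h y q q₀
    calc EQ h q * EQ h y * (EQ h q)⁻¹
        = EQ h q * (EQ h y * (EQ h q)⁻¹ * EQ h q₀) * (EQ h q₀)⁻¹ := by group
      _ = EQ h q * (EQ h q₀ * (EQ h q)⁻¹ * EQ h y) * (EQ h q₀)⁻¹ := by rw [swap]
      _ = EQ h q * (EQ h q₀)⁻¹ * (EQ h q₀ * (EQ h q * (EQ h q₀)⁻¹)⁻¹ * (EQ h q₀)⁻¹) *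
            (EQ h q₀ * EQ h y * (EQ h q₀)⁻¹) := by group
  | one =>
    intro x
    show EQ h ((1 : Equiv.Perm Q) x) = _
    rw [Equiv.Perm.one_apply]
    group
  | mul a b ha hb iha ihb =>
    intro x
    have hmem_a : a ∈ HQ h q₀ := ha
    have hmem_b : b ∈ HQ h q₀ := hb
    show EQ h ((a * b) x) = _
    rw [Equiv.Perm.mul_apply, iha (b x), ihb x]
    have hA : EQ h q₀ * a⁻¹ * (EQ h q₀)⁻¹ ∈ HQ h q₀ := HQ_theta_conj_mem h q₀ (inv_mem hmem_a)
    have hC : EQ h q₀ * b⁻¹ * (EQ h q₀)⁻¹ ∈ HQ h q₀ := HQ_theta_conj_mem h q₀ (inv_mem hmem_b)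
    have hcomm := (HQ_comm h q₀ _ hA _ (mul_mem hmem_b hC)).eq
    calc a * (EQ h q₀ * a⁻¹ * (EQ h q₀)⁻¹) * (b * (EQ h q₀ * b⁻¹ * (EQ h q₀)⁻¹) * EQ h x)
        = a * ((EQ h q₀ * a⁻¹ * (EQ h q₀)⁻¹) * (b * (EQ h q₀ * b⁻¹ * (EQ h q₀)⁻¹))) * EQ h x := by
          group
      _ = a * ((b * (EQ h q₀ * b⁻¹ * (EQ h q₀)⁻¹)) * (EQ h q₀ * a⁻¹ * (EQ h q₀)⁻¹)) * EQ h x := by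
          rw [hcomm]
      _ = a * b * (EQ h q₀ * (a * b)⁻¹ * (EQ h q₀)⁻¹) * EQ h x := by group
  | inv a ha iha =>
    intro x
    have hmem_a : a ∈ HQ h q₀ := ha
    have e1 := iha (a⁻¹ x)
    rw [show a (a⁻¹ x) = x from a.apply_symm_apply x] at e1
    have e2 : EQ h (a⁻¹ x) = (a * (EQ h q₀ * a⁻¹ * (EQ h q₀)⁻¹))⁻¹ * EQ h x := by
      rw [e1]; group
    rw [e2]
    have hconj : EQ h q₀ * a * (EQ h q₀)⁻¹ ∈ HQ h q₀ := HQ_theta_conj_mem h q₀ hmem_a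
    have hcomm := (HQ_comm h q₀ _ hconj _ (inv_mem hmem_a)).eq
    calc (a * (EQ h q₀ * a⁻¹ * (EQ h q₀)⁻¹))⁻¹ * EQ h x
        = (EQ h q₀ * a * (EQ h q₀)⁻¹) * a⁻¹ * EQ h x := by group
      _ = a⁻¹ * (EQ h q₀ * a * (EQ h q₀)⁻¹) * EQ h x := by rw [hcomm]
      _ = a⁻¹ * (EQ h q₀ * (a⁻¹)⁻¹ * (EQ h q₀)⁻¹) * EQ h x := by group

end symMQ

namespace symMQ

variable {X : Type*} [DecidableEq X] {Q : Type} {opQ : Q → Q → Q} {n : ℕ}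

noncomputable def Psi (z : X) (h : Good opQ n) (ψ : X → Q) :
    (({x : X // x ≠ z} →₀ R n) × X) → Q :=
  fun p => uu h (ψ z) (fun j : {x : X // x ≠ z} => ψ j.1) p.1 (ψ p.2)

lemma uu_e (z : X) (h : Good opQ n) (ψ : X → Q) (i : X) :
    uu h (ψ z) (fun j : {x : X // x ≠ z} => ψ j.1) (e n z i) = TQ h (ψ z) (ψ i) := by
  by_cases hi : i = z
  · subst hi
    rw [e_z, uu_zero]
    unfold TQ
    group
  · have he : e n z i = Finsupp.single (⟨i, hi⟩ : {x : X // x ≠ z}) 1 := by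
      simp [e, hi]
    rw [he, uu_single_one]

lemma Psi_base (z : X) (h : Good opQ n) (ψ : X → Q) (i : X) : Psi z h ψ (0, i) = ψ i := by
  unfold Psi
  rw [uu_zero]
  rfl

set_option synthInstance.maxHeartbeats 1000000 in
set_option maxHeartbeats 2000000 in
lemma Psi_homo (z : X) (h : Good opQ n) (ψ : X → Q) (p q : ({x : X // x ≠ z} →₀ R n) × X) :
    Psi z h ψ (op n z p q) = opQ (Psi z h ψ p) (Psi z h ψ q) := by
  obtain ⟨a, i⟩ := p
  obtain ⟨b, j⟩ := q
  set q₀ := ψ z with hq₀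
  set gen := fun j : {x : X // x ≠ z} => ψ j.1 with hgen
  set θ := EQ h q₀ with hθ
  set U := uu h q₀ gen with hU
  show U ((1 - t n) • a + t n • b + e n z i - e n z j) (ψ j) = opQ (U a (ψ i)) (U b (ψ j))
  have et := EQ_trans h q₀ (uu_mem h q₀ gen a) (ψ i)
  have h1 : θ * (U a)⁻¹ * θ⁻¹ = (U (t n • a))⁻¹ := by
    rw [hU, uu_tsmul, hθ]
    group
  have h2 : EQ h (ψ i) = U (e n z i) * θ := by
    rw [hU, uu_e z h ψ i, hθ, hq₀]
    unfold TQ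
    group
  have key : U a * (θ * (U a)⁻¹ * θ⁻¹) * EQ h (ψ i) = U ((1 - t n) • a + e n z i) * θ := by
    rw [h1, h2]
    have h3 : U a * (U (t n • a))⁻¹ * U (e n z i) = U ((1 - t n) • a + e n z i) := by
      rw [hU, ← uu_neg, ← uu_add, ← uu_add]
      congr 1
      module
    calc U a * (U (t n • a))⁻¹ * (U (e n z i) * θ)
        = (U a * (U (t n • a))⁻¹ * U (e n z i)) * θ := by group
      _ = U ((1 - t n) • a + e n z i) * θ := by rw [h3]
  have hth : θ * U b = U (t n • b) * θ := by
    rw [hU, uu_tsmul, hθ]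
    group
  have hfix : (EQ h (ψ j))⁻¹ (ψ j) = ψ j := by
    have e1 : EQ h (ψ j) (ψ j) = ψ j := h.idem (ψ j)
    rw [Equiv.Perm.inv_def, Equiv.symm_apply_eq]
    exact e1.symm
  have hthj : θ (ψ j) = (U (e n z j))⁻¹ (ψ j) := by
    rw [hU, uu_e z h ψ j]
    show _ = ((TQ h q₀ (ψ j))⁻¹ : Equiv.Perm Q) (ψ j)
    unfold TQ
    have e2 : ((EQ h (ψ j) * θ⁻¹)⁻¹ : Equiv.Perm Q) = θ * (EQ h (ψ j))⁻¹ := by group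
    rw [e2, Equiv.Perm.mul_apply, hfix]
  have gperm : U ((1 - t n) • a + t n • b + e n z i - e n z j)
      = U ((1 - t n) • a + e n z i) * U (t n • b) * (U (e n z j))⁻¹ := by
    rw [hU, ← uu_neg, ← uu_add, ← uu_add]
    congr 1
    module
  calc U ((1 - t n) • a + t n • b + e n z i - e n z j) (ψ j)
      = (U ((1 - t n) • a + e n z i) * U (t n • b) * (U (e n z j))⁻¹) (ψ j) := by rw [gperm]
    _ = U ((1 - t n) • a + e n z i) (U (t n • b) ((U (e n z j))⁻¹ (ψ j))) := by
        rw [Equiv.Perm.mul_apply, Equiv.Perm.mul_apply]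
    _ = U ((1 - t n) • a + e n z i) (U (t n • b) (θ (ψ j))) := by rw [hthj]
    _ = U ((1 - t n) • a + e n z i) ((U (t n • b) * θ) (ψ j)) := by rw [Equiv.Perm.mul_apply]
    _ = U ((1 - t n) • a + e n z i) ((θ * U b) (ψ j)) := by rw [hth]
    _ = (U ((1 - t n) • a + e n z i) * θ) (U b (ψ j)) := by
        rw [Equiv.Perm.mul_apply, Equiv.Perm.mul_apply]
    _ = (U a * (θ * (U a)⁻¹ * θ⁻¹) * EQ h (ψ i)) (U b (ψ j)) := by rw [key]
    _ = EQ h (U a (ψ i)) (U b (ψ j)) := by rw [et]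
    _ = opQ (U a (ψ i)) (U b (ψ j)) := rfl

end symMQ


/-- `F = M × X` with `M = ⊕_{x ∈ X∖{z}} ℤ[t]/(1+t+⋯+t^{n-1})` and operation
`(a,i)*(b,j) = ((1-t)·a + t·b + e_i - e_j, j)` is an `n`-symmetric medial quandle,
and it is the free `n`-symmetric medial quandle on `{(0,i) : i ∈ X}`. -/
theorem free_n_symmetric_medial_quandle {X : Type*} [DecidableEq X]
    (n : ℕ) (hn : 1 ≤ n) (z : X) :
    (∀ p, symMQ.op n z p p = p) ∧
    (∀ p q r, symMQ.op n z p (symMQ.op n z q r) =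
      symMQ.op n z (symMQ.op n z p q) (symMQ.op n z p r)) ∧
    (∀ p q, ∃! u, symMQ.op n z p u = q) ∧
    (∀ p q u v, symMQ.op n z (symMQ.op n z p q) (symMQ.op n z u v) =
      symMQ.op n z (symMQ.op n z p u) (symMQ.op n z q v)) ∧
    (∀ p q, (fun r => symMQ.op n z p r)^[n] q = q) ∧
    (∀ (Q : Type) (opQ : Q → Q → Q),
      (∀ x, opQ x x = x) →
      (∀ x y w, opQ x (opQ y w) = opQ (opQ x y) (opQ x w)) →
      (∀ x y, ∃! u, opQ x u = y) →
      (∀ x y u v, opQ (opQ x y) (opQ u v) = opQ (opQ x u) (opQ y v)) →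
      (∀ x y, (fun r => opQ x r)^[n] y = y) →
      ∀ ψ : X → Q,
        ∃! Ψ : (({x : X // x ≠ z} →₀ symMQ.R n) × X) → Q,
          (∀ p q, Ψ (symMQ.op n z p q) = opQ (Ψ p) (Ψ q)) ∧
          (∀ i : X, Ψ ((0 : {x : X // x ≠ z} →₀ symMQ.R n), i) = ψ i)) := by
  refine ⟨symMQ.op_idem n z, symMQ.op_ld n z, ?_, symMQ.op_med n z, symMQ.op_nsym n z hn, ?_⟩
  · intro p q
    exact ⟨(fun r => symMQ.op n z p r)^[n-1] q, symMQ.op_div n z hn p q,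
      fun u hu => by rw [← hu]; exact (symMQ.op_div' n z hn p u).symm⟩
  · intro Q opQ h1 h2 _h3 h4 h5 ψ
    have hG : symMQ.Good opQ n := ⟨hn, h1, h2, h4, h5⟩
    refine ⟨symMQ.Psi z hG ψ,
      ⟨fun p q => symMQ.Psi_homo z hG ψ p q, fun i => symMQ.Psi_base z hG ψ i⟩, ?_⟩
    intro Ψ' hΨ'
    funext p
    have hr := symMQ.reach_all n z hn p
    induction hr with
    | gen i => rw [hΨ'.2 i, symMQ.Psi_base]
    | opc hp hq ihp ihq =>
      rw [hΨ'.1, symMQ.Psi_homo, ihp, ihq]
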